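/- Let d ≥ 1, set N = 2d − 1, and let A_0,…,A_{N−1} ∈ ℝ^{d×d} be the Hankel lifting basis for the square d × d case. Then the (0,0) diagonal entry of the Gram matrix G = Σ_{n=0}^{N−1} A_n A_nᵀ equals the harmonic number H_d = Σ_{j=1}^{d} 1/j, and consequently G[0,0] ≤ 1 + log d. -/

import Mathlib

open Matrix Finset
open Matrix

/-- The number of index pairs on the `n`-th antidiagonal of a `d × m` matrix. -/
def hankelCount (d m n : ℕ) : ℕ :=
  ((Finset.univ : Finset (Fin d × Fin m)).filter
    (fun p => (p.1 : ℕ) + (p.2 : ℕ) = n)).card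

/-- The `n`-th element of the Hankel lifting basis for sizes `d × m`. -/
noncomputable def hankelBasis (d m : ℕ) (n : ℕ) : Matrix (Fin d) (Fin m) ℝ :=
  Matrix.of fun i j =>
    if (i : ℕ) + (j : ℕ) = n then 1 / Real.sqrt (hankelCount d m n) else 0


lemma hankelCount_eq (d n : ℕ) (hn : n < d) : hankelCount d d n = n + 1 := by
  rw [hankelCount, ← Finset.Nat.card_antidiagonal n]
  apply Finset.card_bij (fun p _ => ((p.1 : ℕ), (p.2 : ℕ)))
  · intro p hp
    simp only [Finset.mem_filter] at hp
    simpa [Finset.mem_antidiagonal] using hp.2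
  · intro p _ q _ h
    simp only [Prod.mk.injEq] at h
    ext <;> simp [Fin.val_eq_val] at * <;> omega
  · intro p hp
    rw [Finset.HasAntidiagonal.mem_antidiagonal] at hp
    refine ⟨(⟨p.1, by omega⟩, ⟨p.2, by omega⟩), by simp [hp], by simp⟩

lemma entry_eq (d : ℕ) (hd : 1 ≤ d) (n : ℕ) :
    (hankelBasis d d n * (hankelBasis d d n)ᵀ) ⟨0, hd⟩ ⟨0, hd⟩
      = if n < d then 1 / (n + 1 : ℝ) else 0 := by
  rw [Matrix.mul_apply]
  simp only [Matrix.transpose_apply, hankelBasis, Matrix.of_apply]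
  split_ifs with hn
  · rw [Finset.sum_eq_single (⟨n, hn⟩ : Fin d)]
    · have hc : (hankelCount d d n : ℝ) = n + 1 := by rw [hankelCount_eq d n hn]; push_cast; ring
      rw [if_pos (by simp), hc, ← Real.sqrt_mul_self (by positivity : (0:ℝ) ≤ (n:ℝ)+1)]
      have h1 : Real.sqrt ((n:ℝ)+1) ≠ 0 := by positivity
      field_simp
      rw [Real.sq_sqrt (Real.sqrt_nonneg _)]
    · intro b _ hb
      rw [if_neg]
      · ring
      · simp only [Nat.zero_add]
        intro h; exact hb (by ext; simpa using h)
    · simp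
  · apply Finset.sum_eq_zero
    intro b _
    rw [if_neg (by omega)]
    ring

theorem gram_diagonal_harmonic
    (d : ℕ) (hd : 1 ≤ d) :
    (∑ n ∈ Finset.range (2 * d - 1),
        hankelBasis d d n * (hankelBasis d d n)ᵀ) ⟨0, hd⟩ ⟨0, hd⟩
      = ∑ j ∈ Finset.range d, (1 : ℝ) / (j + 1) ∧
    (∑ n ∈ Finset.range (2 * d - 1),
        hankelBasis d d n * (hankelBasis d d n)ᵀ) ⟨0, hd⟩ ⟨0, hd⟩
      ≤ 1 + Real.log d := by
  have key : (∑ n ∈ Finset.range (2 * d - 1),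
        hankelBasis d d n * (hankelBasis d d n)ᵀ) ⟨0, hd⟩ ⟨0, hd⟩
      = ∑ j ∈ Finset.range d, (1 : ℝ) / (j + 1) := by
    rw [Matrix.sum_apply]
    rw [Finset.sum_congr rfl (fun n _ => entry_eq d hd n)]
    rw [← Finset.sum_filter]
    apply Finset.sum_congr
    · ext x; simp; omega
    · intros; rfl
  refine ⟨key, key.le.trans ?_⟩
  have h := harmonic_le_one_add_log d
  rw [harmonic] at h
  push_cast at h
  simpa using h
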